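/- For every real number r > 0, the function x ↦ log((tanh x)/x) / log((r² − x²)/r²) is strictly decreasing on the open interval (0, r). -/

import Mathlib

open Real Set Filter Topology

private lemma aux_pos {F F' : ℝ → ℝ} (hd : ∀ t, HasDerivAt F (F' t) t) (h0 : F 0 = 0)
    (hp : ∀ t, 0 < t → 0 < F' t) : ∀ t, 0 < t → 0 < F t := by
  intro t ht
  have hmono : StrictMonoOn F (Ici 0) := by
    apply strictMonoOn_of_deriv_pos (convex_Ici 0)
      (fun y _ => (hd y).continuousAt.continuousWithinAt)
    intro y hy
    rw [interior_Ici] at hy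
    rw [(hd y).deriv]
    exact hp y hy
  have := hmono self_mem_Ici (Set.mem_Ici.2 ht.le) ht
  rwa [h0] at this

private lemma hasDerivAt_O (A B C B' C' t : ℝ) (hB : B' = B + C) (hC : C' = C + 2) :
    HasDerivAt (fun t : ℝ => A*(sinh t*cosh t) - B*sinh t - C*(t*cosh t) - t^2*sinh t)
      (A*(cosh t^2) + A*(sinh t^2) - B'*cosh t - C'*(t*sinh t) - t^2*cosh t) t := by
  subst hB hC
  have h1 : HasDerivAt (fun t : ℝ => sinh t*cosh t) (cosh t*cosh t + sinh t*sinh t) t :=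
    (Real.hasDerivAt_sinh t).mul (Real.hasDerivAt_cosh t)
  have h2 : HasDerivAt (fun t : ℝ => t*cosh t) (1*cosh t + t*sinh t) t :=
    (hasDerivAt_id t).mul (Real.hasDerivAt_cosh t)
  have h3 : HasDerivAt (fun t : ℝ => t^2) (2*t) t := by
    simpa using hasDerivAt_pow 2 t
  have h4 : HasDerivAt (fun t : ℝ => t^2*sinh t) ((2*t)*sinh t + t^2*cosh t) t :=
    h3.mul (Real.hasDerivAt_sinh t)
  have h5 := (((h1.const_mul A).sub ((Real.hasDerivAt_sinh t).const_mul B)).sub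
    (h2.const_mul C)).sub h4
  refine h5.congr_deriv ?_
  ring

private lemma hasDerivAt_E (A B C A' B' C' t : ℝ) (hA : A' = 4*A) (hB : B' = B + C) (hC : C' = C + 2) :
    HasDerivAt (fun t : ℝ => A*(cosh t^2) + A*(sinh t^2) - B*cosh t - C*(t*sinh t) - t^2*cosh t)
      (A'*(sinh t*cosh t) - B'*sinh t - C'*(t*cosh t) - t^2*sinh t) t := by
  subst hA hB hC
  have h1 : HasDerivAt (fun t : ℝ => cosh t^2) (2*cosh t*sinh t) t := by
    have := (Real.hasDerivAt_cosh t).pow 2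
    exact this.congr_deriv (by norm_num)
  have h2 : HasDerivAt (fun t : ℝ => sinh t^2) (2*sinh t*cosh t) t := by
    have := (Real.hasDerivAt_sinh t).pow 2
    exact this.congr_deriv (by norm_num)
  have h3 : HasDerivAt (fun t : ℝ => t*sinh t) (1*sinh t + t*cosh t) t :=
    (hasDerivAt_id t).mul (Real.hasDerivAt_sinh t)
  have h4 : HasDerivAt (fun t : ℝ => t^2) (2*t) t := by
    simpa using hasDerivAt_pow 2 t
  have h5 : HasDerivAt (fun t : ℝ => t^2*cosh t) ((2*t)*cosh t + t^2*sinh t) t :=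
    h4.mul (Real.hasDerivAt_cosh t)
  have h6 := ((((h1.const_mul A).add (h2.const_mul A)).sub
    ((Real.hasDerivAt_cosh t).const_mul B)).sub (h3.const_mul C)).sub h5
  refine h6.congr_deriv ?_
  ring

private lemma key (t : ℝ) (ht : 0 < t) : t*sinh t + t^2*cosh t < 2*sinh t^2 := by
  have P6 : ∀ s : ℝ, 0 < s →
      0 < 64*(cosh s^2) + 64*(sinh s^2) - 36*cosh s - 13*(s*sinh s) - s^2*cosh s := by
    intro s hs
    have hc1 := Real.one_le_cosh s
    have hs1 : s ≤ sinh s := Real.self_le_sinh_iff.2 hs.le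
    have hcosh : cosh s = 2*(sinh (s/2))^2 + 1 := by
      have h1 := Real.cosh_two_mul (s/2)
      have h2 := Real.cosh_sq (s/2)
      rw [show 2*(s/2) = s by ring] at h1
      linarith
    have hhalf : s/2 ≤ sinh (s/2) := Real.self_le_sinh_iff.2 (by positivity)
    have hts : s^2 ≤ 2*(cosh s - 1) := by nlinarith [sq_nonneg (sinh (s/2) - s/2), hs.le]
    nlinarith [mul_le_mul_of_nonneg_right hs1 (le_trans hs.le hs1),
      mul_le_mul_of_nonneg_right hts (le_trans zero_le_one hc1), hc1, hs,
      sq_nonneg (sinh s), sq_nonneg (cosh s)]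
  have P5 : ∀ s : ℝ, 0 < s →
      0 < 64*(sinh s*cosh s) - 25*sinh s - 11*(s*cosh s) - s^2*sinh s :=
    aux_pos (fun s => hasDerivAt_O 64 25 11 36 13 s (by norm_num) (by norm_num)) (by simp) P6
  have P4 : ∀ s : ℝ, 0 < s →
      0 < 16*(cosh s^2) + 16*(sinh s^2) - 16*cosh s - 9*(s*sinh s) - s^2*cosh s :=
    aux_pos (fun s => hasDerivAt_E 16 16 9 64 25 11 s (by norm_num) (by norm_num) (by norm_num))
      (by simp) P5
  have P3 : ∀ s : ℝ, 0 < s →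
      0 < 16*(sinh s*cosh s) - 9*sinh s - 7*(s*cosh s) - s^2*sinh s :=
    aux_pos (fun s => hasDerivAt_O 16 9 7 16 9 s (by norm_num) (by norm_num)) (by simp) P4
  have P2 : ∀ s : ℝ, 0 < s →
      0 < 4*(cosh s^2) + 4*(sinh s^2) - 4*cosh s - 5*(s*sinh s) - s^2*cosh s :=
    aux_pos (fun s => hasDerivAt_E 4 4 5 16 9 7 s (by norm_num) (by norm_num) (by norm_num))
      (by simp) P3
  have P1 : ∀ s : ℝ, 0 < s →
      0 < 4*(sinh s*cosh s) - 1*sinh s - 3*(s*cosh s) - s^2*sinh s :=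
    aux_pos (fun s => hasDerivAt_O 4 1 3 4 5 s (by norm_num) (by norm_num)) (by simp) P2
  have P0 : ∀ s : ℝ, 0 < s → 0 < 2*(sinh s^2) - s*sinh s - s^2*cosh s := by
    apply aux_pos (F' := fun s => 4*(sinh s*cosh s) - 1*sinh s - 3*(s*cosh s) - s^2*sinh s)
      ?_ (by simp) P1
    intro s
    have h2 : HasDerivAt (fun t : ℝ => sinh t^2) (2*sinh s*cosh s) s := by
      exact ((Real.hasDerivAt_sinh s).pow 2).congr_deriv (by norm_num)
    have h3 : HasDerivAt (fun t : ℝ => t*sinh t) (1*sinh s + s*cosh s) s :=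
      (hasDerivAt_id s).mul (Real.hasDerivAt_sinh s)
    have h4 : HasDerivAt (fun t : ℝ => t^2) (2*s) s := by simpa using hasDerivAt_pow 2 s
    have h5 : HasDerivAt (fun t : ℝ => t^2*cosh t) ((2*s)*cosh s + s^2*sinh s) s :=
      h4.mul (Real.hasDerivAt_cosh s)
    have h6 := ((h2.const_mul 2).sub h3).sub h5
    refine h6.congr_deriv ?_
    ring
  have := P0 t ht
  linarith


private lemma phi_hasDerivAt {y : ℝ} (hy : 0 < y) :
    HasDerivAt (fun y : ℝ => (2*y^2)⁻¹ - (y*sinh (2*y))⁻¹)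
      (-(4*y)/(2*y^2)^2 - -(1*sinh (2*y) + y*(2*cosh (2*y)))/(y*sinh (2*y))^2) y := by
  have hs : 0 < sinh (2*y) := Real.sinh_pos_iff.2 (by positivity)
  have h1 : HasDerivAt (fun y : ℝ => 2*y^2) (4*y) y := by
    have := (hasDerivAt_pow 2 y).const_mul (2:ℝ)
    refine this.congr_deriv ?_
    norm_num
    ring
  have h2 := h1.inv (by positivity : (2*y^2) ≠ 0)
  have h3 : HasDerivAt (fun y : ℝ => sinh (2*y)) (2*cosh (2*y)) y := by
    have hinner : HasDerivAt (fun y : ℝ => 2*y) 2 y := by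
      simpa using (hasDerivAt_id y).const_mul (2:ℝ)
    have := (Real.hasDerivAt_sinh (2*y)).comp y hinner
    refine this.congr_deriv ?_
    ring
  have h4 : HasDerivAt (fun y : ℝ => y*sinh (2*y)) (1*sinh (2*y) + y*(2*cosh (2*y))) y :=
    (hasDerivAt_id y).mul h3
  have h5 := h4.inv (by positivity : y*sinh (2*y) ≠ 0)
  exact h2.sub h5

private lemma phi_deriv_neg {y : ℝ} (hy : 0 < y) :
    -(4*y)/(2*y^2)^2 - -(1*sinh (2*y) + y*(2*cosh (2*y)))/(y*sinh (2*y))^2 < 0 := by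
  have hs : 0 < sinh (2*y) := Real.sinh_pos_iff.2 (by positivity)
  have hk := key (2*y) (by positivity)
  have h1 : (0:ℝ) < (2*y^2)^2 := by positivity
  have h2 : (0:ℝ) < (y*sinh (2*y))^2 := by positivity
  have hlt : (1*sinh (2*y) + y*(2*cosh (2*y)))/(y*sinh (2*y))^2 < (4*y)/(2*y^2)^2 := by
    rw [div_lt_div_iff₀ h2 h1]
    nlinarith [mul_pos (mul_pos hy hy) hy, hk, hs, hy]
  rw [neg_div, neg_div]
  linarith

private lemma phi_pos {y : ℝ} (hy : 0 < y) : 0 < (2*y^2)⁻¹ - (y*sinh (2*y))⁻¹ := by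
  have h1 : 2*y < sinh (2*y) := Real.self_lt_sinh_iff.2 (by positivity)
  have h2 : (0:ℝ) < 2*y^2 := by positivity
  have h3 : 2*y^2 < y*sinh (2*y) := by nlinarith
  have := inv_strictAnti₀ h2 h3
  linarith

private lemma phi_anti : StrictAntiOn (fun y : ℝ => (2*y^2)⁻¹ - (y*sinh (2*y))⁻¹) (Ioi 0) := by
  apply strictAntiOn_of_deriv_neg (convex_Ioi 0)
  · intro y hy
    exact (phi_hasDerivAt hy).continuousAt.continuousWithinAt
  · intro y hy
    rw [interior_Ioi] at hy
    rw [(phi_hasDerivAt hy).deriv]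
    exact phi_deriv_neg hy


theorem stmt_12 (r : ℝ) (hr : 0 < r) :
    StrictAntiOn
      (fun x : ℝ => Real.log (Real.tanh x / x) / Real.log ((r ^ 2 - x ^ 2) / r ^ 2))
      (Set.Ioo 0 r) := by
  -- G is negative on the interval
  have hGne : ∀ y ∈ Ioo (0:ℝ) r, Real.log ((r ^ 2 - y ^ 2) / r ^ 2) < 0 := by
    intro y hy
    obtain ⟨hy0, hyr⟩ := hy
    have hnum : 0 < r ^ 2 - y ^ 2 := by nlinarith
    apply Real.log_neg (div_pos hnum (by positivity))
    rw [div_lt_one (by positivity)]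
    nlinarith
  -- derivative of F
  have hFd : ∀ y ∈ Ioo (0:ℝ) r, HasDerivAt (fun x : ℝ => Real.log (Real.tanh x / x))
      (cosh y/sinh y - sinh y/cosh y - y⁻¹) y := by
    intro y hy
    obtain ⟨hy0, hyr⟩ := hy
    have hsy : 0 < sinh y := Real.sinh_pos_iff.2 hy0
    have hcy : 0 < cosh y := Real.cosh_pos y
    have h1 : HasDerivAt (fun x : ℝ => Real.log (Real.sinh x)) (cosh y/sinh y) y :=
      (Real.hasDerivAt_sinh y).log hsy.ne'
    have h2 : HasDerivAt (fun x : ℝ => Real.log (Real.cosh x)) (sinh y/cosh y) y :=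
      (Real.hasDerivAt_cosh y).log hcy.ne'
    have h3 : HasDerivAt Real.log y⁻¹ y := Real.hasDerivAt_log hy0.ne'
    apply HasDerivAt.congr_of_eventuallyEq ((h1.sub h2).sub h3)
    filter_upwards [isOpen_Ioo.mem_nhds (show y ∈ Ioo 0 r from ⟨hy0, hyr⟩)] with z hz
    obtain ⟨hz0, hzr⟩ := hz
    have hsz : 0 < sinh z := Real.sinh_pos_iff.2 hz0
    have hcz : 0 < cosh z := Real.cosh_pos z
    have htz : 0 < tanh z := by rw [Real.tanh_eq_sinh_div_cosh]; positivity
    rw [Real.log_div htz.ne' hz0.ne', Real.tanh_eq_sinh_div_cosh, Real.log_div hsz.ne' hcz.ne']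
    rfl
  -- derivative of G
  have hGd : ∀ y ∈ Ioo (0:ℝ) r, HasDerivAt (fun x : ℝ => Real.log ((r ^ 2 - x ^ 2) / r ^ 2))
      (-(2*y)/(r ^ 2 - y ^ 2)) y := by
    intro y hy
    obtain ⟨hy0, hyr⟩ := hy
    have hnum : 0 < r ^ 2 - y ^ 2 := by nlinarith
    have h1 : HasDerivAt (fun x : ℝ => r ^ 2 - x ^ 2) (-(2*y)) y := by
      have := (hasDerivAt_pow 2 y).const_sub (r ^ 2)
      refine this.congr_deriv ?_
      norm_num
    have h2 := (h1.log hnum.ne').sub_const (Real.log (r ^ 2))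
    apply HasDerivAt.congr_of_eventuallyEq h2
    filter_upwards [isOpen_Ioo.mem_nhds (show y ∈ Ioo 0 r from ⟨hy0, hyr⟩)] with z hz
    obtain ⟨hz0, hzr⟩ := hz
    have hnz : 0 < r ^ 2 - z ^ 2 := by nlinarith
    rw [Real.log_div hnz.ne' (by positivity : (r:ℝ) ^ 2 ≠ 0)]
  -- F' = h * G'
  have hrel : ∀ y ∈ Ioo (0:ℝ) r, cosh y/sinh y - sinh y/cosh y - y⁻¹ =
      ((r ^ 2 - y ^ 2) * ((2*y^2)⁻¹ - (y*sinh (2*y))⁻¹)) * (-(2*y)/(r ^ 2 - y ^ 2)) := by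
    intro y hy
    obtain ⟨hy0, hyr⟩ := hy
    have hsy : 0 < sinh y := Real.sinh_pos_iff.2 hy0
    have hcy : 0 < cosh y := Real.cosh_pos y
    have hnum : 0 < r ^ 2 - y ^ 2 := by nlinarith
    have hid : cosh y ^ 2 - sinh y ^ 2 = 1 := Real.cosh_sq_sub_sinh_sq y
    rw [Real.sinh_two_mul]
    field_simp
    linear_combination y*hid
  -- limits at 0+
  have hFlim : Tendsto (fun y : ℝ => Real.log (Real.tanh y / y)) (nhdsWithin 0 (Ioi 0)) (nhds 0) := by
    have h1 : HasDerivAt Real.tanh 1 0 := by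
      have h0 : HasDerivAt (fun x : ℝ => sinh x / cosh x)
          ((cosh 0 * cosh 0 - sinh 0 * sinh 0) / cosh 0 ^ 2) 0 :=
        (Real.hasDerivAt_sinh 0).div (Real.hasDerivAt_cosh 0) (Real.cosh_pos 0).ne'
      have hfun : Real.tanh = fun x : ℝ => sinh x / cosh x :=
        funext fun x => Real.tanh_eq_sinh_div_cosh x
      rw [hfun]
      simpa using h0
    have h2 : Tendsto (fun y : ℝ => Real.tanh y / y) (nhdsWithin 0 {(0:ℝ)}ᶜ) (nhds 1) := by
      have := hasDerivAt_iff_tendsto_slope.1 h1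
      simpa [slope_fun_def_field, Real.tanh_zero] using this
    have h3 : Tendsto (fun y : ℝ => Real.tanh y / y) (nhdsWithin 0 (Ioi 0)) (nhds 1) :=
      h2.mono_left (nhdsWithin_mono 0 (fun z hz => ne_of_gt hz))
    have h4 := (Real.continuousAt_log one_ne_zero).tendsto.comp h3
    simpa [Function.comp_def] using h4
  have hGlim : Tendsto (fun y : ℝ => Real.log ((r ^ 2 - y ^ 2) / r ^ 2))
      (nhdsWithin 0 (Ioi 0)) (nhds 0) := by
    have hne : (r ^ 2 - (0:ℝ) ^ 2) / r ^ 2 ≠ 0 := by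
      have : (r ^ 2 - (0:ℝ) ^ 2) / r ^ 2 = 1 := by field_simp; ring
      rw [this]; exact one_ne_zero
    have hcont : ContinuousAt (fun y : ℝ => (r ^ 2 - y ^ 2) / r ^ 2) 0 :=
      ((continuous_const.sub (continuous_pow 2)).div_const _).continuousAt
    have hc : ContinuousAt (fun y : ℝ => Real.log ((r ^ 2 - y ^ 2) / r ^ 2)) 0 :=
      ContinuousAt.comp (f := fun y : ℝ => (r ^ 2 - y ^ 2) / r ^ 2) (Real.continuousAt_log hne) hcont
    have h5 := hc.tendsto.mono_left (nhdsWithin_le_nhds (s := Ioi (0:ℝ)))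
    have h0 : Real.log ((r ^ 2 - (0:ℝ) ^ 2) / r ^ 2) = 0 := by
      rw [show (r ^ 2 - (0:ℝ) ^ 2) / r ^ 2 = 1 by field_simp; ring]
      exact Real.log_one
    rwa [h0] at h5
  -- Claim A : F x < h x * G x
  have claimA : ∀ x ∈ Ioo (0:ℝ) r, Real.log (Real.tanh x / x) <
      ((r ^ 2 - x ^ 2) * ((2*x^2)⁻¹ - (x*sinh (2*x))⁻¹)) * Real.log ((r ^ 2 - x ^ 2) / r ^ 2) := by
    intro x hx
    obtain ⟨hx0, hxr⟩ := hx
    set c : ℝ := (r ^ 2 - x ^ 2) * ((2*x^2)⁻¹ - (x*Real.sinh (2*x))⁻¹) with hcdef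
    have hsub : Ioc (0:ℝ) x ⊆ Ioo 0 r := fun z hz => ⟨hz.1, lt_of_le_of_lt hz.2 hxr⟩
    have hpsid : ∀ y ∈ Ioc (0:ℝ) x,
        HasDerivAt (fun z : ℝ => Real.log (Real.tanh z / z) - c * Real.log ((r ^ 2 - z ^ 2) / r ^ 2))
          ((cosh y/sinh y - sinh y/cosh y - y⁻¹) - c * (-(2*y)/(r ^ 2 - y ^ 2))) y :=
      fun y hy => (hFd y (hsub hy)).sub ((hGd y (hsub hy)).const_mul c)
    have hanti : StrictAntiOn
        (fun z : ℝ => Real.log (Real.tanh z / z) - c * Real.log ((r ^ 2 - z ^ 2) / r ^ 2))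
        (Ioc 0 x) := by
      apply strictAntiOn_of_deriv_neg (convex_Ioc 0 x)
        (fun y hy => (hpsid y hy).continuousAt.continuousWithinAt)
      intro y hy
      rw [interior_Ioc] at hy
      rw [(hpsid y (Ioo_subset_Ioc_self hy)).deriv]
      have hyIoo : y ∈ Ioo (0:ℝ) r := ⟨hy.1, hy.2.trans hxr⟩
      rw [hrel y hyIoo]
      have hnum : 0 < r ^ 2 - y ^ 2 := by nlinarith [hyIoo.2, hy.1]
      have hG'neg : -(2*y)/(r ^ 2 - y ^ 2) < 0 :=
        div_neg_of_neg_of_pos (by linarith [hy.1]) hnum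
      have hhy : c < (r ^ 2 - y ^ 2) * ((2*y^2)⁻¹ - (y*sinh (2*y))⁻¹) := by
        rw [hcdef]
        apply mul_lt_mul''
        · nlinarith [hy.2, hy.1, hxr]
        · exact phi_anti (mem_Ioi.2 hy.1) (mem_Ioi.2 hx0) hy.2
        · nlinarith [hxr, hx0]
        · exact (phi_pos hx0).le
      nlinarith [mul_neg_of_pos_of_neg (sub_pos.2 hhy) hG'neg]
    have hpsilim : Tendsto
        (fun y : ℝ => Real.log (Real.tanh y / y) - c * Real.log ((r ^ 2 - y ^ 2) / r ^ 2))
        (nhdsWithin 0 (Ioi 0)) (nhds 0) := by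
      have := hFlim.sub (hGlim.const_mul c)
      simpa using this
    have hx2 : x/2 ∈ Ioc (0:ℝ) x := ⟨by positivity, by linarith⟩
    have hev : ∀ᶠ y in nhdsWithin 0 (Ioi (0:ℝ)),
        (fun z : ℝ => Real.log (Real.tanh z / z) - c * Real.log ((r ^ 2 - z ^ 2) / r ^ 2)) (x/2) ≤
        (fun z : ℝ => Real.log (Real.tanh z / z) - c * Real.log ((r ^ 2 - z ^ 2) / r ^ 2)) y := by
      filter_upwards [Ioo_mem_nhdsGT_of_mem
        (show (0:ℝ) ∈ Ico 0 (x/2) from ⟨le_refl 0, by positivity⟩)] with z hz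
      exact (hanti ⟨hz.1, hz.2.le.trans (by linarith)⟩ hx2 hz.2).le
    have h5 := ge_of_tendsto hpsilim hev
    have h6 := hanti hx2 ⟨hx0, le_refl x⟩ (by linarith)
    simp only [] at h5 h6
    linarith
  -- main argument
  apply strictAntiOn_of_deriv_neg (convex_Ioo 0 r)
  · intro y hy
    have hq : HasDerivAt
        (fun x : ℝ => Real.log (Real.tanh x / x) / Real.log ((r ^ 2 - x ^ 2) / r ^ 2))
        (((cosh y/sinh y - sinh y/cosh y - y⁻¹) * Real.log ((r ^ 2 - y ^ 2) / r ^ 2) -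
          Real.log (Real.tanh y / y) * (-(2*y)/(r ^ 2 - y ^ 2))) /
          (Real.log ((r ^ 2 - y ^ 2) / r ^ 2)) ^ 2) y :=
      (hFd y hy).div (hGd y hy) (hGne y hy).ne
    exact hq.continuousAt.continuousWithinAt
  · intro y hy
    rw [interior_Ioo] at hy
    have hq : HasDerivAt
        (fun x : ℝ => Real.log (Real.tanh x / x) / Real.log ((r ^ 2 - x ^ 2) / r ^ 2))
        (((cosh y/sinh y - sinh y/cosh y - y⁻¹) * Real.log ((r ^ 2 - y ^ 2) / r ^ 2) -
          Real.log (Real.tanh y / y) * (-(2*y)/(r ^ 2 - y ^ 2))) /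
          (Real.log ((r ^ 2 - y ^ 2) / r ^ 2)) ^ 2) y :=
      (hFd y hy).div (hGd y hy) (hGne y hy).ne
    rw [hq.deriv]
    apply div_neg_of_neg_of_pos
    · rw [hrel y hy]
      have hA := claimA y hy
      have hnum : 0 < r ^ 2 - y ^ 2 := by nlinarith [hy.2, hy.1]
      have hG'neg : -(2*y)/(r ^ 2 - y ^ 2) < 0 :=
        div_neg_of_neg_of_pos (by linarith [hy.1]) hnum
      nlinarith [mul_neg_of_neg_of_pos hG'neg (sub_pos.2 hA)]
    · exact pow_two_pos_of_ne_zero (hGne y hy).ne
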